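/- If X = (X′,V) and Y = (Y′,V) where X′ and Y′ are conditionally independent given V, then Wyner's common information C(X;Y) = min_{p(u|x,y): X−U−Y} I(X,Y;U) satisfies C(X;Y) = I(X;Y) = H(V). -/

import Mathlib

open Finset

def IsPMF {Ω : Type*} [Fintype Ω] (p : Ω → ℝ) : Prop :=
  (∀ ω, 0 ≤ p ω) ∧ ∑ ω, p ω = 1

noncomputable def pr {Ω : Type*} [Fintype Ω] {α : Type*} [Fintype α] [DecidableEq α]
    (p : Ω → ℝ) (X : Ω → α) (x : α) : ℝ :=
  ∑ ω ∈ Finset.univ.filter (fun ω => X ω = x), p ω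

/-- Shannon entropy (base 2) of the random variable `X` under `p`. -/
noncomputable def ent {Ω : Type*} [Fintype Ω] {α : Type*} [Fintype α] [DecidableEq α]
    (p : Ω → ℝ) (X : Ω → α) : ℝ :=
  -∑ x, pr p X x * Real.logb 2 (pr p X x)

/-- Conditional entropy H(X | U). -/
noncomputable def centH {Ω : Type*} [Fintype Ω] {α β : Type*} [Fintype α] [DecidableEq α]
    [Fintype β] [DecidableEq β] (p : Ω → ℝ) (X : Ω → α) (U : Ω → β) : ℝ :=
  ent p (fun ω => (X ω, U ω)) - ent p U

/-- Mutual information I(X;Y). -/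
noncomputable def mi {Ω : Type*} [Fintype Ω] {α β : Type*} [Fintype α] [DecidableEq α]
    [Fintype β] [DecidableEq β] (p : Ω → ℝ) (X : Ω → α) (Y : Ω → β) : ℝ :=
  ent p X + ent p Y - ent p (fun ω => (X ω, Y ω))

/-- Conditional mutual information I(X;Y|U). -/
noncomputable def cmi {Ω : Type*} [Fintype Ω] {α β γ : Type*} [Fintype α] [DecidableEq α]
    [Fintype β] [DecidableEq β] [Fintype γ] [DecidableEq γ]
    (p : Ω → ℝ) (X : Ω → α) (Y : Ω → β) (U : Ω → γ) : ℝ :=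
  centH p X U + centH p Y U - centH p (fun ω => (X ω, Y ω)) U

def IndepRV {Ω : Type*} [Fintype Ω] {α β : Type*} [Fintype α] [DecidableEq α]
    [Fintype β] [DecidableEq β] (p : Ω → ℝ) (X : Ω → α) (Y : Ω → β) : Prop :=
  ∀ x y, pr p (fun ω => (X ω, Y ω)) (x, y) = pr p X x * pr p Y y

/-- A conditional pmf `w(u|x,y)`. -/
def CondPMF {X Y U : Type*} [Fintype U] (w : X → Y → U → ℝ) : Prop :=
  (∀ x y u, 0 ≤ w x y u) ∧ ∀ x y, ∑ u, w x y u = 1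

/-- The joint pmf `q(x,y) w(u|x,y)` on `X × Y × U`. -/
noncomputable def jointQ {X Y U : Type*} (q : X × Y → ℝ) (w : X → Y → U → ℝ) :
    X × Y × U → ℝ := fun ω => q (ω.1, ω.2.1) * w ω.1 ω.2.1 ω.2.2

/-- I(X;Y|U) under the joint pmf `q(x,y) w(u|x,y)`. -/
noncomputable def cmiXY {X Y U : Type*} [Fintype X] [DecidableEq X] [Fintype Y] [DecidableEq Y]
    [Fintype U] [DecidableEq U] (q : X × Y → ℝ) (w : X → Y → U → ℝ) : ℝ :=
  cmi (jointQ q w) (fun ω => ω.1) (fun ω => ω.2.1) (fun ω => ω.2.2)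

/-- I(X,Y;U) under the joint pmf `q(x,y) w(u|x,y)`. -/
noncomputable def miXYU {X Y U : Type*} [Fintype X] [DecidableEq X] [Fintype Y] [DecidableEq Y]
    [Fintype U] [DecidableEq U] (q : X × Y → ℝ) (w : X → Y → U → ℝ) : ℝ :=
  mi (jointQ q w) (fun ω => (ω.1, ω.2.1)) (fun ω => ω.2.2)

set_option linter.unusedSectionVars false

section helpers1
variable {Ω α β : Type*} [Fintype Ω] [Fintype α] [DecidableEq α] [Fintype β] [DecidableEq β]

lemma pr_eq_sum_ite (p : Ω → ℝ) (X : Ω → α) (x : α) :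
    pr p X x = ∑ ω, if X ω = x then p ω else 0 := by
  rw [pr, Finset.sum_filter]

lemma pr_nonneg {p : Ω → ℝ} (hp : ∀ ω, 0 ≤ p ω) (X : Ω → α) (x : α) : 0 ≤ pr p X x :=
  Finset.sum_nonneg fun ω _ => hp ω

lemma sum_pr (p : Ω → ℝ) (X : Ω → α) : ∑ x, pr p X x = ∑ ω, p ω := by
  unfold pr
  exact Finset.sum_fiberwise_of_maps_to (fun ω _ => Finset.mem_univ _) p

lemma pr_comp (p : Ω → ℝ) (Z : Ω → α) (g : α → β) (b : β) :
    pr (pr p Z) g b = pr p (fun ω => g (Z ω)) b := by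
  rw [pr_eq_sum_ite, pr_eq_sum_ite]
  have h : ∀ a : α, (if g a = b then pr p Z a else 0)
      = ∑ ω ∈ Finset.univ.filter (fun ω => Z ω = a), (if g (Z ω) = b then p ω else 0) := by
    intro a
    by_cases h : g a = b
    · simp only [h, if_pos]
      refine Finset.sum_congr rfl fun ω hω => ?_
      rw [Finset.mem_filter] at hω
      rw [hω.2, h, if_pos rfl]
    · simp only [h, if_neg, not_false_iff]
      refine (Finset.sum_eq_zero fun ω hω => ?_).symm
      rw [Finset.mem_filter] at hω
      rw [hω.2, if_neg h]
  rw [Finset.sum_congr rfl fun a _ => h a]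
  exact Finset.sum_fiberwise_of_maps_to (fun ω _ => Finset.mem_univ _) _

lemma ent_comp (p : Ω → ℝ) (Z : Ω → α) (g : α → β) :
    ent (pr p Z) g = ent p (fun ω => g (Z ω)) := by
  unfold ent
  simp_rw [pr_comp]

lemma ent_congr {Ω' : Type*} [Fintype Ω'] {p : Ω → ℝ} {p' : Ω' → ℝ} {X : Ω → α} {X' : Ω' → α}
    (h : ∀ x, pr p X x = pr p' X' x) : ent p X = ent p' X' := by
  unfold ent; simp_rw [h]

lemma pr_comp_inj (p : Ω → ℝ) (X : Ω → α) (e : α → β) (he : Function.Injective e) (a : α) :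
    pr p (fun ω => e (X ω)) (e a) = pr p X a := by
  unfold pr
  congr 1
  apply Finset.filter_congr
  intro ω _
  simp [he.eq_iff]

lemma ent_comp_inj (p : Ω → ℝ) (X : Ω → α) (e : α → β) (he : Function.Injective e) :
    ent p (fun ω => e (X ω)) = ent p X := by
  unfold ent
  congr 1
  set F : β → ℝ := fun b => pr p (fun ω => e (X ω)) b * Real.logb 2 (pr p (fun ω => e (X ω)) b)
    with hF
  have h1 : ∑ b, F b = ∑ b ∈ Finset.univ.image e, F b := by
    symm
    apply Finset.sum_subset (Finset.subset_univ _)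
    intro b _ hb
    have h0 : pr p (fun ω => e (X ω)) b = 0 := by
      rw [pr_eq_sum_ite]
      apply Finset.sum_eq_zero
      intro ω _
      rw [if_neg]
      intro h
      exact hb (Finset.mem_image.2 ⟨X ω, Finset.mem_univ _, h⟩)
    simp [hF, h0]
  rw [h1, Finset.sum_image (fun x _ y _ h => he h)]
  refine Finset.sum_congr rfl fun a _ => ?_
  simp [hF, pr_comp_inj p X e he a]

end helpers1

section core
variable {Ω A B C : Type*} [Fintype Ω] [Fintype A] [DecidableEq A]
    [Fintype B] [DecidableEq B] [Fintype C] [DecidableEq C]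

lemma marg_XU (p : Ω → ℝ) (X : Ω → A) (Y : Ω → B) (U : Ω → C) (x : A) (u : C) :
    pr p (fun ω => (X ω, U ω)) (x, u)
      = ∑ y, pr p (fun ω => ((X ω, Y ω), U ω)) ((x, y), u) := by
  simp_rw [pr_eq_sum_ite]
  rw [Finset.sum_comm]
  refine Finset.sum_congr rfl fun ω _ => ?_
  simp only [Prod.mk.injEq]
  by_cases hx : X ω = x
  · by_cases hu : U ω = u
    · simp [hx, hu, Finset.sum_ite_eq]
    · simp [hu]
  · simp [hx]

lemma marg_YU (p : Ω → ℝ) (X : Ω → A) (Y : Ω → B) (U : Ω → C) (y : B) (u : C) :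
    pr p (fun ω => (Y ω, U ω)) (y, u)
      = ∑ x, pr p (fun ω => ((X ω, Y ω), U ω)) ((x, y), u) := by
  simp_rw [pr_eq_sum_ite]
  rw [Finset.sum_comm]
  refine Finset.sum_congr rfl fun ω _ => ?_
  simp only [Prod.mk.injEq]
  by_cases hy : Y ω = y
  · by_cases hu : U ω = u
    · simp [hy, hu, Finset.sum_ite_eq]
    · simp [hu]
  · simp [hy]

lemma marg_U (p : Ω → ℝ) (X : Ω → A) (Y : Ω → B) (U : Ω → C) (u : C) :
    pr p U u = ∑ s : A × B, pr p (fun ω => ((X ω, Y ω), U ω)) (s, u) := by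
  simp_rw [pr_eq_sum_ite]
  rw [Finset.sum_comm]
  refine Finset.sum_congr rfl fun ω _ => ?_
  simp only [Prod.mk.injEq]
  by_cases hu : U ω = u
  · rw [Fintype.sum_prod_type]
    simp [hu, ite_and, Finset.sum_ite_eq]
  · simp [hu]

lemma cmi_core (r : (A × B) × C → ℝ) (h0 : ∀ z, 0 ≤ r z) (h1 : ∑ z, r z = 1) :
    0 ≤ ∑ z, r z * (Real.logb 2 (r z) + Real.logb 2 (∑ s : A × B, r (s, z.2))
        - Real.logb 2 (∑ y, r ((z.1.1, y), z.2)) - Real.logb 2 (∑ x, r ((x, z.1.2), z.2))) := by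
  classical
  set hU : C → ℝ := fun u => ∑ s : A × B, r (s, u) with hhU
  set f2 : A → C → ℝ := fun x u => ∑ y, r ((x, y), u) with hf2
  set g2 : B → C → ℝ := fun y u => ∑ x, r ((x, y), u) with hg2
  set t : (A × B) × C → ℝ := fun z => r z * (Real.logb 2 (r z) + Real.logb 2 (hU z.2)
        - Real.logb 2 (f2 z.1.1 z.2) - Real.logb 2 (g2 z.1.2 z.2)) with ht
  set a : (A × B) × C → ℝ := fun z => f2 z.1.1 z.2 * g2 z.1.2 z.2 / hU z.2 with ha
  have hlog2 : (0:ℝ) < Real.log 2 := Real.log_pos (by norm_num)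
  have hf0 : ∀ x u, 0 ≤ f2 x u := fun x u => Finset.sum_nonneg fun _ _ => h0 _
  have hg0 : ∀ y u, 0 ≤ g2 y u := fun y u => Finset.sum_nonneg fun _ _ => h0 _
  have hh0 : ∀ u, 0 ≤ hU u := fun u => Finset.sum_nonneg fun _ _ => h0 _
  have hrf : ∀ z, r z ≤ f2 z.1.1 z.2 := by
    intro z
    have := Finset.single_le_sum (f := fun y => r ((z.1.1, y), z.2))
      (fun i _ => h0 _) (Finset.mem_univ z.1.2)
    simpa using this
  have hrg : ∀ z, r z ≤ g2 z.1.2 z.2 := by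
    intro z
    have := Finset.single_le_sum (f := fun x => r ((x, z.1.2), z.2))
      (fun i _ => h0 _) (Finset.mem_univ z.1.1)
    simpa using this
  have hrh : ∀ z, r z ≤ hU z.2 := by
    intro z
    have := Finset.single_le_sum (f := fun s : A × B => r (s, z.2))
      (fun i _ => h0 _) (Finset.mem_univ z.1)
    simpa using this
  set S : Finset ((A × B) × C) := Finset.univ.filter (fun z => 0 < r z) with hS
  have hpt : ∀ z ∈ S, (r z - a z) / Real.log 2 ≤ t z := by
    intro z hz
    rw [hS, Finset.mem_filter] at hz
    have hr : 0 < r z := hz.2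
    have hf : 0 < f2 z.1.1 z.2 := lt_of_lt_of_le hr (hrf z)
    have hg : 0 < g2 z.1.2 z.2 := lt_of_lt_of_le hr (hrg z)
    have hh : 0 < hU z.2 := lt_of_lt_of_le hr (hrh z)
    have key : Real.log (f2 z.1.1 z.2) + Real.log (g2 z.1.2 z.2) - Real.log (r z)
        - Real.log (hU z.2) ≤ f2 z.1.1 z.2 * g2 z.1.2 z.2 / (r z * hU z.2) - 1 := by
      have hq : 0 < f2 z.1.1 z.2 * g2 z.1.2 z.2 / (r z * hU z.2) :=
        div_pos (mul_pos hf hg) (mul_pos hr hh)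
      have := Real.log_le_sub_one_of_pos hq
      rw [Real.log_div (by positivity) (by positivity), Real.log_mul hf.ne' hg.ne',
        Real.log_mul hr.ne' hh.ne'] at this
      linarith
    have hL : r z - a z ≤ r z * (Real.log (r z) + Real.log (hU z.2)
        - Real.log (f2 z.1.1 z.2) - Real.log (g2 z.1.2 z.2)) := by
      have h2 : r z * (f2 z.1.1 z.2 * g2 z.1.2 z.2 / (r z * hU z.2)) = a z := by
        rw [ha]; field_simp
      nlinarith [mul_le_mul_of_nonneg_left key hr.le]
    have ht2 : t z = r z * (Real.log (r z) + Real.log (hU z.2)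
        - Real.log (f2 z.1.1 z.2) - Real.log (g2 z.1.2 z.2)) / Real.log 2 := by
      rw [ht]; simp only [Real.logb]; ring
    rw [ht2]
    exact (div_le_div_iff_of_pos_right hlog2).mpr hL
  have hsum_t : ∑ z, t z = ∑ z ∈ S, t z := by
    rw [hS]
    exact (Finset.sum_filter_of_ne (fun z _ hne => by
      rcases lt_or_eq_of_le (h0 z) with h | h
      · exact h
      · exact absurd (by rw [ht]; simp [← h]) hne)).symm
  have hsum_r : ∑ z ∈ S, r z = 1 := by
    rw [hS, Finset.sum_filter_of_ne (fun z _ hne => lt_of_le_of_ne (h0 z) (Ne.symm hne)), h1]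
  have hsum_a : ∑ z ∈ S, a z ≤ 1 := by
    set T : Finset ((A × B) × C) := Finset.univ.filter (fun z => 0 < hU z.2) with hT
    have hST : S ⊆ T := by
      intro z hz
      rw [hS, Finset.mem_filter] at hz
      rw [hT, Finset.mem_filter]
      exact ⟨Finset.mem_univ _, lt_of_lt_of_le hz.2 (hrh z)⟩
    have h3 : ∑ z ∈ S, a z ≤ ∑ z ∈ T, a z := by
      apply Finset.sum_le_sum_of_subset_of_nonneg hST
      intro z hz _
      rw [hT, Finset.mem_filter] at hz
      exact div_nonneg (mul_nonneg (hf0 _ _) (hg0 _ _)) (hh0 _)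
    have hfs : ∀ u, ∑ x, f2 x u = hU u := by
      intro u; rw [hhU]; simp only [hf2]
      rw [Fintype.sum_prod_type]
    have hgs : ∀ u, ∑ y, g2 y u = hU u := by
      intro u; rw [hhU]; simp only [hg2]
      rw [Fintype.sum_prod_type, Finset.sum_comm]
    have h4 : ∑ z ∈ T, a z = ∑ u ∈ Finset.univ.filter (fun u => 0 < hU u), hU u := by
      rw [hT, Finset.sum_filter, Finset.sum_filter, Fintype.sum_prod_type, Finset.sum_comm]
      refine Finset.sum_congr rfl fun u _ => ?_
      by_cases hc : 0 < hU u
      · simp only [hc, if_true]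
        have e1 : ∀ s : A × B, a (s, u) = f2 s.1 u * g2 s.2 u / hU u := fun s => rfl
        simp_rw [e1]
        rw [Fintype.sum_prod_type]
        have e2 : ∀ x : A, ∑ y : B, f2 x u * g2 y u / hU u = f2 x u * hU u / hU u := by
          intro x
          rw [← Finset.sum_div, ← Finset.mul_sum, hgs]
        simp_rw [e2]
        rw [← Finset.sum_div, ← Finset.sum_mul, hfs]
        field_simp
      · simp [hc]
    have h5 : ∑ u ∈ Finset.univ.filter (fun u => 0 < hU u), hU u ≤ ∑ u, hU u :=
      Finset.sum_le_sum_of_subset_of_nonneg (Finset.filter_subset _ _) (fun u _ _ => hh0 u)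
    have h6 : ∑ u, hU u = 1 := by
      rw [hhU, ← h1, Fintype.sum_prod_type, Finset.sum_comm]
    linarith
  have h7 : 0 ≤ (∑ z ∈ S, r z - ∑ z ∈ S, a z) / Real.log 2 :=
    div_nonneg (by linarith) hlog2.le
  calc (0:ℝ) ≤ (∑ z ∈ S, r z - ∑ z ∈ S, a z) / Real.log 2 := h7
    _ = ∑ z ∈ S, (r z - a z) / Real.log 2 := by
        rw [← Finset.sum_sub_distrib, Finset.sum_div]
    _ ≤ ∑ z ∈ S, t z := Finset.sum_le_sum hpt
    _ = ∑ z, t z := hsum_t.symm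

lemma cmi_nonneg (p : Ω → ℝ) (hp : IsPMF p) (X : Ω → A) (Y : Ω → B) (U : Ω → C) :
    0 ≤ cmi p X Y U := by
  classical
  set r : (A × B) × C → ℝ := pr p (fun ω => ((X ω, Y ω), U ω)) with hr
  have h0 : ∀ z, 0 ≤ r z := fun z => pr_nonneg hp.1 _ z
  have h1 : ∑ z, r z = 1 := by rw [hr, sum_pr, hp.2]
  have eXYU : ent p (fun ω => ((X ω, Y ω), U ω)) = -∑ z, r z * Real.logb 2 (r z) := rfl
  have eU : ent p U = -∑ z, r z * Real.logb 2 (∑ s : A × B, r (s, z.2)) := by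
    rw [ent]
    congr 1
    calc ∑ u, pr p U u * Real.logb 2 (pr p U u)
        = ∑ u, ∑ s : A × B, r (s, u) * Real.logb 2 (∑ s' : A × B, r (s', u)) := by
          refine Finset.sum_congr rfl fun u _ => ?_
          rw [marg_U p X Y U u, Finset.sum_mul]
      _ = ∑ z : (A × B) × C, r z * Real.logb 2 (∑ s' : A × B, r (s', z.2)) := by
          rw [Fintype.sum_prod_type (f := fun z : (A × B) × C =>
            r z * Real.logb 2 (∑ s' : A × B, r (s', z.2))), Finset.sum_comm]
  have eXU : ent p (fun ω => (X ω, U ω))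
      = -∑ z, r z * Real.logb 2 (∑ y, r ((z.1.1, y), z.2)) := by
    rw [ent]
    congr 1
    calc ∑ v : A × C, pr p (fun ω => (X ω, U ω)) v * Real.logb 2 (pr p (fun ω => (X ω, U ω)) v)
        = ∑ x, ∑ u, (∑ y, r ((x, y), u)) * Real.logb 2 (∑ y, r ((x, y), u)) := by
          rw [Fintype.sum_prod_type]
          exact Finset.sum_congr rfl fun x _ => Finset.sum_congr rfl fun u _ => by
            rw [marg_XU p X Y U x u]
      _ = ∑ x, ∑ u, ∑ y, r ((x, y), u) * Real.logb 2 (∑ y', r ((x, y'), u)) := by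
          refine Finset.sum_congr rfl fun x _ => Finset.sum_congr rfl fun u _ => ?_
          rw [Finset.sum_mul]
      _ = ∑ z : (A × B) × C, r z * Real.logb 2 (∑ y, r ((z.1.1, y), z.2)) := by
          rw [Fintype.sum_prod_type (f := fun z : (A × B) × C =>
            r z * Real.logb 2 (∑ y, r ((z.1.1, y), z.2))), Fintype.sum_prod_type]
          exact Finset.sum_congr rfl fun x _ => Finset.sum_comm
  have eYU : ent p (fun ω => (Y ω, U ω))
      = -∑ z, r z * Real.logb 2 (∑ x, r ((x, z.1.2), z.2)) := by
    rw [ent]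
    congr 1
    calc ∑ v : B × C, pr p (fun ω => (Y ω, U ω)) v * Real.logb 2 (pr p (fun ω => (Y ω, U ω)) v)
        = ∑ y, ∑ u, (∑ x, r ((x, y), u)) * Real.logb 2 (∑ x, r ((x, y), u)) := by
          rw [Fintype.sum_prod_type]
          exact Finset.sum_congr rfl fun y _ => Finset.sum_congr rfl fun u _ => by
            rw [marg_YU p X Y U y u]
      _ = ∑ y, ∑ u, ∑ x, r ((x, y), u) * Real.logb 2 (∑ x', r ((x', y), u)) := by
          refine Finset.sum_congr rfl fun y _ => Finset.sum_congr rfl fun u _ => ?_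
          rw [Finset.sum_mul]
      _ = ∑ z : (A × B) × C, r z * Real.logb 2 (∑ x, r ((x, z.1.2), z.2)) := by
          rw [Fintype.sum_prod_type (f := fun z : (A × B) × C =>
            r z * Real.logb 2 (∑ x, r ((x, z.1.2), z.2))), Fintype.sum_prod_type]
          have swap1 : ∀ y : B, (∑ u : C, ∑ x : A, r ((x, y), u)
              * Real.logb 2 (∑ x', r ((x', y), u)))
              = ∑ x : A, ∑ u : C, r ((x, y), u) * Real.logb 2 (∑ x', r ((x', y), u)) :=
            fun y => Finset.sum_comm
          simp_rw [swap1]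
          exact Finset.sum_comm
  have key : cmi p X Y U = ∑ z, r z * (Real.logb 2 (r z)
      + Real.logb 2 (∑ s : A × B, r (s, z.2))
      - Real.logb 2 (∑ y, r ((z.1.1, y), z.2)) - Real.logb 2 (∑ x, r ((x, z.1.2), z.2))) := by
    rw [cmi, centH, centH, centH, eXYU, eU, eXU, eYU]
    rw [show ∀ a b c d : ℝ, (-c - -b) + (-d - -b) - (-a - -b) = a + b - c - d by intros; ring]
    rw [← Finset.sum_add_distrib, ← Finset.sum_sub_distrib, ← Finset.sum_sub_distrib]
    exact Finset.sum_congr rfl fun z _ => by ring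
  rw [key]
  exact cmi_core r h0 h1

end core

section swaps
variable {Ω A B C : Type*} [Fintype Ω] [Fintype A] [DecidableEq A]
    [Fintype B] [DecidableEq B] [Fintype C] [DecidableEq C]

lemma ent_swap (p : Ω → ℝ) (X : Ω → A) (Y : Ω → B) :
    ent p (fun ω => (Y ω, X ω)) = ent p (fun ω => (X ω, Y ω)) := by
  have h := ent_comp_inj p (fun ω => (X ω, Y ω)) (fun s => (s.2, s.1))
    (fun s t h => by
      simp only [Prod.mk.injEq] at h
      exact Prod.ext h.2 h.1)
  simpa using h

lemma ent_rot1 (p : Ω → ℝ) (X : Ω → A) (Y : Ω → B) (U : Ω → C) :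
    ent p (fun ω => ((Y ω, U ω), X ω)) = ent p (fun ω => ((X ω, Y ω), U ω)) := by
  have h := ent_comp_inj p (fun ω => ((X ω, Y ω), U ω))
    (fun s : (A × B) × C => ((s.1.2, s.2), s.1.1))
    (fun s t h => by
      simp only [Prod.mk.injEq] at h
      exact Prod.ext (Prod.ext h.2 h.1.1) h.1.2)
  simpa using h

lemma ent_rot2 (p : Ω → ℝ) (X : Ω → A) (Y : Ω → B) (U : Ω → C) :
    ent p (fun ω => ((X ω, U ω), Y ω)) = ent p (fun ω => ((X ω, Y ω), U ω)) := by
  have h := ent_comp_inj p (fun ω => ((X ω, Y ω), U ω))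
    (fun s : (A × B) × C => ((s.1.1, s.2), s.1.2))
    (fun s t h => by
      simp only [Prod.mk.injEq] at h
      exact Prod.ext (Prod.ext h.1.1 h.2) h.1.2)
  simpa using h

lemma mi3_ge (p : Ω → ℝ) (hp : IsPMF p) (X : Ω → A) (Y : Ω → B) (U : Ω → C) :
    mi p X Y ≤ mi p (fun ω => (X ω, Y ω)) U + cmi p X Y U := by
  have hA := cmi_nonneg p hp Y U X
  have hB := cmi_nonneg p hp X U Y
  have e1 := ent_swap p X Y
  have e2 := ent_swap p X U
  have e3 := ent_rot1 p X Y U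
  have e4 := ent_swap p Y U
  have e5 := ent_rot2 p X Y U
  simp only [cmi, centH, mi] at *
  rw [e1, e2, e3] at hA
  rw [e4, e5] at hB
  linarith

end swaps

section joint
variable {X Y U : Type*} [Fintype X] [DecidableEq X] [Fintype Y] [DecidableEq Y]
    [Fintype U] [DecidableEq U]

lemma jointQ_pmf (q : X × Y → ℝ) (w : X → Y → U → ℝ) (hq : IsPMF q) (hw : CondPMF w) :
    IsPMF (jointQ q w) := by
  constructor
  · intro ω
    exact mul_nonneg (hq.1 _) (hw.1 _ _ _)
  · rw [Fintype.sum_prod_type]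
    have e1 : ∀ x : X, ∑ s : Y × U, jointQ q w (x, s) = ∑ y, q (x, y) := by
      intro x
      rw [Fintype.sum_prod_type]
      refine Finset.sum_congr rfl fun y _ => ?_
      simp only [jointQ]
      rw [← Finset.mul_sum, hw.2, mul_one]
    simp_rw [e1]
    rw [← Fintype.sum_prod_type, hq.2]

lemma pr_jointQ {E : Type*} [Fintype E] [DecidableEq E] (q : X × Y → ℝ) (w : X → Y → U → ℝ)
    (hw : CondPMF w) (g : X × Y → E) (e : E) :
    pr (jointQ q w) (fun ω => g (ω.1, ω.2.1)) e = pr q g e := by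
  rw [pr_eq_sum_ite, pr_eq_sum_ite]
  rw [Fintype.sum_prod_type, Fintype.sum_prod_type]
  refine Finset.sum_congr rfl fun x _ => ?_
  rw [Fintype.sum_prod_type]
  refine Finset.sum_congr rfl fun y _ => ?_
  by_cases hc : g (x, y) = e
  · simp only [hc, if_true, jointQ]
    rw [← Finset.mul_sum, hw.2, mul_one]
  · simp [hc, jointQ]
end joint

section transfer
variable {Ω α A B C : Type*} [Fintype Ω] [Fintype α] [DecidableEq α] [Fintype A] [DecidableEq A]
    [Fintype B] [DecidableEq B] [Fintype C] [DecidableEq C]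

lemma mi_pr (p : Ω → ℝ) (Z : Ω → α) (f : α → A) (g : α → B) :
    mi (pr p Z) f g = mi p (fun ω => f (Z ω)) (fun ω => g (Z ω)) := by
  simp only [mi, ent_comp]

lemma cmi_pr (p : Ω → ℝ) (Z : Ω → α) (f : α → A) (g : α → B) (h : α → C) :
    cmi (pr p Z) f g h
      = cmi p (fun ω => f (Z ω)) (fun ω => g (Z ω)) (fun ω => h (Z ω)) := by
  simp only [cmi, centH, ent_comp]

end transfer

/-- If `X = (X′,V)` and `Y = (Y′,V)` with `X′ ⊥ Y′ | V`, then Wyner's common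
information satisfies `C(X;Y) = I(X;Y) = H(V)`. -/
theorem stmt13 {Ω A B C : Type*} [Fintype Ω] [Fintype A] [DecidableEq A]
    [Fintype B] [DecidableEq B] [Fintype C] [DecidableEq C]
    (p : Ω → ℝ) (hp : IsPMF p)
    (X' : Ω → A) (Y' : Ω → B) (V : Ω → C)
    (hci : cmi p X' Y' V = 0) :
    sInf { z : ℝ | ∃ w : (A × C) → (B × C) →
          Fin (Fintype.card (A × C) * Fintype.card (B × C) + 2) → ℝ,
        CondPMF w ∧
        cmiXY (fun s => pr p (fun ω => ((X' ω, V ω), (Y' ω, V ω))) s) w = 0 ∧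
        z = miXYU (fun s => pr p (fun ω => ((X' ω, V ω), (Y' ω, V ω))) s) w }
      = mi p (fun ω => (X' ω, V ω)) (fun ω => (Y' ω, V ω))
    ∧ mi p (fun ω => (X' ω, V ω)) (fun ω => (Y' ω, V ω)) = ent p V := by
  classical
  set q : (A × C) × (B × C) → ℝ :=
    fun s => pr p (fun ω => ((X' ω, V ω), (Y' ω, V ω))) s with hq_def
  -- part 2
  have hpair : ent p (fun ω => ((X' ω, V ω), (Y' ω, V ω)))
      = ent p (fun ω => ((X' ω, Y' ω), V ω)) := by
    have h := ent_comp_inj p (fun ω => ((X' ω, Y' ω), V ω))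
      (fun s : (A × B) × C => ((s.1.1, s.2), (s.1.2, s.2)))
      (fun s t h => by
        simp only [Prod.mk.injEq] at h
        exact Prod.ext (Prod.ext h.1.1 h.2.1) h.1.2)
    simpa using h
  have h2 : mi p (fun ω => (X' ω, V ω)) (fun ω => (Y' ω, V ω)) = ent p V := by
    simp only [cmi, centH] at hci
    simp only [mi]
    rw [hpair]
    linarith
  refine ⟨?_, h2⟩
  -- nonemptiness of Ω and the injection ι
  have hΩ : Nonempty Ω := by
    by_contra h
    rw [not_nonempty_iff] at h
    have h1 := hp.2
    rw [Finset.univ_eq_empty, Finset.sum_empty] at h1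
    norm_num at h1
  obtain ⟨ω0⟩ := hΩ
  have hcard : Fintype.card C ≤ Fintype.card (A × C) * Fintype.card (B × C) + 2 := by
    have h1 : Fintype.card C ≤ Fintype.card (A × C) :=
      Fintype.card_le_of_injective (fun c => (X' ω0, c)) (fun a b h => (Prod.ext_iff.1 h).2)
    have hb : 0 < Fintype.card (B × C) := Fintype.card_pos_iff.2 ⟨(Y' ω0, V ω0)⟩
    calc Fintype.card C ≤ Fintype.card (A × C) := h1
      _ ≤ Fintype.card (A × C) * Fintype.card (B × C) := Nat.le_mul_of_pos_right _ hb
      _ ≤ _ + 2 := Nat.le_add_right _ _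
  set ι : C → Fin (Fintype.card (A × C) * Fintype.card (B × C) + 2) :=
    fun c => Fin.castLE hcard (Fintype.equivFin C c) with hι_def
  have hι : Function.Injective ι := fun a b h =>
    (Fintype.equivFin C).injective (Fin.castLE_injective hcard h)
  -- entropy identities
  have hW : ent p (fun ω => ι (V ω)) = ent p V := ent_comp_inj p V ι hι
  have hXW : ent p (fun ω => ((X' ω, V ω), ι (V ω))) = ent p (fun ω => (X' ω, V ω)) := by
    have h := ent_comp_inj p (fun ω => (X' ω, V ω)) (fun s : A × C => (s, ι s.2))
      (fun s t h => (Prod.ext_iff.1 h).1)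
    simpa using h
  have hYW : ent p (fun ω => ((Y' ω, V ω), ι (V ω))) = ent p (fun ω => (Y' ω, V ω)) := by
    have h := ent_comp_inj p (fun ω => (Y' ω, V ω)) (fun s : B × C => (s, ι s.2))
      (fun s t h => (Prod.ext_iff.1 h).1)
    simpa using h
  have hXYW : ent p (fun ω => (((X' ω, V ω), (Y' ω, V ω)), ι (V ω)))
      = ent p (fun ω => ((X' ω, V ω), (Y' ω, V ω))) := by
    have h := ent_comp_inj p (fun ω => ((X' ω, V ω), (Y' ω, V ω)))
      (fun s : (A × C) × (B × C) => (s, ι s.1.2))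
      (fun s t h => (Prod.ext_iff.1 h).1)
    simpa using h
  -- the witness channel
  set w0 : (A × C) → (B × C) → Fin (Fintype.card (A × C) * Fintype.card (B × C) + 2) → ℝ :=
    fun x _ u => if u = ι x.2 then 1 else 0 with hw0_def
  have hw0 : CondPMF w0 := by
    constructor
    · intro x y u
      simp only [hw0_def]
      split <;> norm_num
    · intro x y
      simp [hw0_def, Finset.sum_ite_eq']
  have hfun : jointQ q w0
      = pr p (fun ω => ((X' ω, V ω), ((Y' ω, V ω), ι (V ω)))) := by
    funext z
    obtain ⟨x, y, u⟩ := z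
    show q (x, y) * w0 x y u = _
    by_cases hc : u = ι x.2
    · have : w0 x y u = 1 := by rw [hw0_def]; exact if_pos hc
      rw [this, mul_one]
      show pr p (fun ω => ((X' ω, V ω), (Y' ω, V ω))) (x, y) = _
      rw [pr_eq_sum_ite, pr_eq_sum_ite]
      refine Finset.sum_congr rfl fun ω _ => ?_
      refine if_congr ?_ rfl rfl
      constructor
      · intro h
        have h1 : (X' ω, V ω) = x := congrArg Prod.fst h
        have h2 : (Y' ω, V ω) = y := congrArg Prod.snd h
        have h3 : V ω = x.2 := by rw [← h1]
        refine Prod.ext h1 (Prod.ext h2 ?_)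
        show ι (V ω) = u
        rw [h3, hc]
      · intro h
        have h1 : (X' ω, V ω) = x := congrArg (fun z => z.1) h
        have h2 : (Y' ω, V ω) = y := congrArg (fun z => z.2.1) h
        exact Prod.ext h1 h2
    · have : w0 x y u = 0 := by rw [hw0_def]; exact if_neg hc
      rw [this, mul_zero]
      symm
      rw [pr_eq_sum_ite]
      refine Finset.sum_eq_zero fun ω _ => ?_
      rw [if_neg]
      intro h
      have h1 : (X' ω, V ω) = x := congrArg (fun z => z.1) h
      have h3 : V ω = x.2 := by rw [← h1]
      have h4 : ι (V ω) = u := congrArg (fun z => z.2.2) h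
      exact hc (by rw [← h4, h3])
  have hmem1 : cmiXY q w0 = 0 := by
    have e : cmiXY q w0
        = cmi p (fun ω => (X' ω, V ω)) (fun ω => (Y' ω, V ω)) (fun ω => ι (V ω)) := by
      show cmi (jointQ q w0) (fun ω => ω.1) (fun ω => ω.2.1) (fun ω => ω.2.2) = _
      rw [hfun]
      exact cmi_pr p (fun ω => ((X' ω, V ω), ((Y' ω, V ω), ι (V ω))))
        (fun z => z.1) (fun z => z.2.1) (fun z => z.2.2)
    rw [e]
    simp only [cmi, centH]
    rw [hW, hXW, hYW, hXYW]
    simp only [mi] at h2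
    linarith
  have hmem2 : miXYU q w0 = mi p (fun ω => (X' ω, V ω)) (fun ω => (Y' ω, V ω)) := by
    have e : miXYU q w0
        = mi p (fun ω => ((X' ω, V ω), (Y' ω, V ω))) (fun ω => ι (V ω)) := by
      show mi (jointQ q w0) (fun ω => (ω.1, ω.2.1)) (fun ω => ω.2.2) = _
      rw [hfun]
      exact mi_pr p (fun ω => ((X' ω, V ω), ((Y' ω, V ω), ι (V ω))))
        (fun z => (z.1, z.2.1)) (fun z => z.2.2)
    rw [e]
    simp only [mi]
    rw [hW, hXYW]
    simp only [mi] at h2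
    linarith
  have hmem : mi p (fun ω => (X' ω, V ω)) (fun ω => (Y' ω, V ω)) ∈
      { z : ℝ | ∃ w : (A × C) → (B × C) →
          Fin (Fintype.card (A × C) * Fintype.card (B × C) + 2) → ℝ,
        CondPMF w ∧ cmiXY q w = 0 ∧ z = miXYU q w } :=
    ⟨w0, hw0, hmem1, hmem2.symm⟩
  -- lower bound
  have hlb : ∀ z ∈ { z : ℝ | ∃ w : (A × C) → (B × C) →
          Fin (Fintype.card (A × C) * Fintype.card (B × C) + 2) → ℝ,
        CondPMF w ∧ cmiXY q w = 0 ∧ z = miXYU q w },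
      mi p (fun ω => (X' ω, V ω)) (fun ω => (Y' ω, V ω)) ≤ z := by
    rintro z ⟨w, hw, hc0, rfl⟩
    have hqpmf : IsPMF q :=
      ⟨fun s => pr_nonneg hp.1 _ s, by rw [hq_def]; rw [sum_pr, hp.2]⟩
    have hjq : IsPMF (jointQ q w) := jointQ_pmf q w hqpmf hw
    have hineq := mi3_ge (jointQ q w) hjq
      (fun ω => ω.1) (fun ω => ω.2.1) (fun ω => ω.2.2)
    have n1 : ∀ e, pr (jointQ q w) (fun ω => ω.1) e
        = pr p (fun ω => (X' ω, V ω)) e := by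
      intro e
      have a1 := pr_jointQ q w hw Prod.fst e
      have a2 := pr_comp p (fun ω => ((X' ω, V ω), (Y' ω, V ω))) Prod.fst e
      simp only at a1 a2
      calc pr (jointQ q w) (fun ω => ω.1) e = pr q Prod.fst e := by simpa using a1
        _ = pr p (fun ω => (X' ω, V ω)) e := by simpa using a2
    have n2 : ∀ e, pr (jointQ q w) (fun ω => ω.2.1) e
        = pr p (fun ω => (Y' ω, V ω)) e := by
      intro e
      have a1 := pr_jointQ q w hw Prod.snd e
      have a2 := pr_comp p (fun ω => ((X' ω, V ω), (Y' ω, V ω))) Prod.snd e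
      calc pr (jointQ q w) (fun ω => ω.2.1) e = pr q Prod.snd e := by simpa using a1
        _ = pr p (fun ω => (Y' ω, V ω)) e := by simpa using a2
    have n3 : ∀ e, pr (jointQ q w) (fun ω => (ω.1, ω.2.1)) e
        = pr p (fun ω => ((X' ω, V ω), (Y' ω, V ω))) e := by
      intro e
      have a1 := pr_jointQ q w hw (fun s => (s.1, s.2)) e
      have a2 := pr_comp p (fun ω => ((X' ω, V ω), (Y' ω, V ω))) (fun s => (s.1, s.2)) e
      calc pr (jointQ q w) (fun ω => (ω.1, ω.2.1)) e
          = pr q (fun s => (s.1, s.2)) e := by simpa using a1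
        _ = pr p (fun ω => ((X' ω, V ω), (Y' ω, V ω))) e := by simpa using a2
    have eL : mi (jointQ q w) (fun ω => ω.1) (fun ω => ω.2.1)
        = mi p (fun ω => (X' ω, V ω)) (fun ω => (Y' ω, V ω)) := by
      simp only [mi]
      rw [ent_congr n1, ent_congr n2, ent_congr n3]
    have e0 : cmi (jointQ q w) (fun ω => ω.1) (fun ω => ω.2.1) (fun ω => ω.2.2)
        = cmiXY q w := rfl
    have e1 : mi (jointQ q w) (fun ω => (ω.1, ω.2.1)) (fun ω => ω.2.2)
        = miXYU q w := rfl
    rw [eL, e0, e1, hc0] at hineq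
    linarith
  exact le_antisymm
    (csInf_le ⟨_, hlb⟩ hmem)
    (le_csInf ⟨_, hmem⟩ hlb)
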